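/- The sequence of growth functions (Γ_m) tends pointwise to the function n ↦ (n+1)(n+2)/2 as m → ∞: for every n ∈ ℕ there exists M ∈ ℕ such that for all m ≥ M, Γ_m(n) = (n+1)(n+2)/2. -/

import Mathlib

/- The automaton transformation `f₀` of the Mealy automaton `I_m` acting on
infinite words `u : ℕ → Fin m`: if `u` is constantly `m-1` it returns the
constant `0` sequence; otherwise, with `j` the least index where `u j ≠ m-1`,
it sets positions `≤ j` to `0` and keeps the rest. -/
open Classical in
noncomputable def f0 (m : ℕ) (u : ℕ → Fin m) : ℕ → Fin m :=
  if h : ∃ j, (u j : ℕ) ≠ m - 1 then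
    fun i => if i ≤ Nat.find h then ⟨0, (u 0).pos⟩ else u i
  else fun _ => ⟨0, (u 0).pos⟩

/- The automaton transformation `f₁` (the base-`m` odometer): if `u` is
constantly `m-1` it returns the constant `0` sequence; otherwise, with `j` the
least index where `u j ≠ m-1`, positions `< j` become `0`, position `j` is
incremented and the rest are kept. -/
open Classical in
noncomputable def f1 (m : ℕ) (u : ℕ → Fin m) : ℕ → Fin m :=
  if h : ∃ j, (u j : ℕ) ≠ m - 1 then
    fun i =>
      if i < Nat.find h then ⟨0, (u 0).pos⟩
      else if hie : i = Nat.find h then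
        ⟨(u i : ℕ) + 1, by
          have h2 := Nat.find_spec h
          rw [← hie] at h2
          have h3 := (u i).isLt
          have h4 := (u 0).pos
          omega⟩
      else u i
  else fun _ => ⟨0, (u 0).pos⟩

/- The automaton transformation monoid `S_m`: the set of self-maps of
`ℕ → Fin m` that are finite compositions of maps from `{f₀, f₁}`. -/
def SM (m : ℕ) : Set ((ℕ → Fin m) → ℕ → Fin m) :=
  {s | ∃ L : List ((ℕ → Fin m) → ℕ → Fin m),
    (∀ g ∈ L, g = f0 m ∨ g = f1 m) ∧ L.foldr (· ∘ ·) id = s}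

/- The length `ℓ(s)`: the least `n` such that `s` is a composition of `n` maps,
each equal to `f₀` or `f₁` (so `ℓ(id) = 0`). -/
noncomputable def wordLength (m : ℕ) (s : (ℕ → Fin m) → ℕ → Fin m) : ℕ :=
  sInf {n | ∃ L : List ((ℕ → Fin m) → ℕ → Fin m),
    L.length = n ∧ (∀ g ∈ L, g = f0 m ∨ g = f1 m) ∧ L.foldr (· ∘ ·) id = s}

/- The word growth function `γ_m(n) = card {s ∈ S_m : ℓ(s) = n}`. -/
noncomputable def gammaW (m n : ℕ) : ℕ :=
  Set.ncard {s | s ∈ SM m ∧ wordLength m s = n}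

/- The growth function `Γ_m(n) = card {s ∈ S_m : ℓ(s) ≤ n}`. -/
noncomputable def GammaG (m n : ℕ) : ℕ :=
  Set.ncard {s | s ∈ SM m ∧ wordLength m s ≤ n}

section Aux
variable {m : ℕ}

lemma f0_eq (u : ℕ → Fin m) (h0 : (u 0 : ℕ) ≠ m - 1) :
    f0 m u = fun i => if i = 0 then ⟨0, (u 0).pos⟩ else u i := by
  have h : ∃ j, (u j : ℕ) ≠ m - 1 := ⟨0, h0⟩
  have hf : Nat.find h = 0 := (Nat.find_eq_zero h).mpr h0
  funext i
  simp only [f0, dif_pos h, hf, Nat.le_zero]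

lemma f1_eq (u : ℕ → Fin m) (h0 : (u 0 : ℕ) ≠ m - 1) :
    f1 m u = fun i => if i = 0 then
      ⟨(u 0 : ℕ) + 1, by have h1 := (u 0).isLt; have h2 := (u 0).pos; omega⟩
      else u i := by
  have h : ∃ j, (u j : ℕ) ≠ m - 1 := ⟨0, h0⟩
  have hf : Nat.find h = 0 := (Nat.find_eq_zero h).mpr h0
  funext i
  simp only [f1, dif_pos h]
  by_cases hi : i = 0
  · subst hi
    rw [if_neg (by rw [hf]; omega), dif_pos hf.symm, if_pos rfl]
  · rw [if_neg (by rw [hf]; omega), dif_neg (by rw [hf]; omega), if_neg hi]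

lemma f0_eq2 (u : ℕ → Fin m) (h0 : (u 0 : ℕ) = m - 1) (h1 : (u 1 : ℕ) ≠ m - 1) :
    f0 m u = fun i => if i ≤ 1 then ⟨0, (u 0).pos⟩ else u i := by
  have h : ∃ j, (u j : ℕ) ≠ m - 1 := ⟨1, h1⟩
  have hf : Nat.find h = 1 := by
    rw [Nat.find_eq_iff]
    refine ⟨h1, ?_⟩
    intro k hk
    have : k = 0 := by omega
    subst this
    simp only [ne_eq, not_not]
    exact h0
  funext i
  simp only [f0, dif_pos h, hf]

lemma f1_eq2 (u : ℕ → Fin m) (h0 : (u 0 : ℕ) = m - 1) (h1 : (u 1 : ℕ) ≠ m - 1) :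
    f1 m u = fun i => if i = 0 then ⟨0, (u 0).pos⟩ else if i = 1 then
      ⟨(u 1 : ℕ) + 1, by have := (u 1).isLt; have := (u 0).pos; omega⟩
      else u i := by
  have h : ∃ j, (u j : ℕ) ≠ m - 1 := ⟨1, h1⟩
  have hf : Nat.find h = 1 := by
    rw [Nat.find_eq_iff]
    refine ⟨h1, ?_⟩
    intro k hk
    have : k = 0 := by omega
    subst this
    simp only [ne_eq, not_not]
    exact h0
  funext i
  by_cases hi : i = 0
  · subst hi
    simp only [f1, dif_pos h, hf, if_pos rfl]
    simp
  · by_cases hi1 : i = 1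
    · subst hi1
      simp only [f1, dif_pos h]
      rw [if_neg (by rw [hf]; omega), dif_pos hf.symm, if_neg hi]
      simp
    · simp only [f1, dif_pos h]
      rw [if_neg (by rw [hf]; omega), dif_neg (by rw [hf]; omega), if_neg hi, if_neg hi1]

end Aux
section Aux2
variable {m : ℕ}

lemma f0_zero (u : ℕ → Fin m) : ((f0 m u) 0 : ℕ) = 0 := by
  simp only [f0]
  split
  · simp
  · rfl

lemma iter_f1 (k : ℕ) (u : ℕ → Fin m) (h : (u 0 : ℕ) + k ≤ m - 1) :
    (f1 m)^[k] u = fun i => if i = 0 then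
      ⟨(u 0 : ℕ) + k, by have := (u 0).isLt; omega⟩ else u i := by
  induction k with
  | zero =>
    funext i
    by_cases hi : i = 0
    · subst hi; simp
    · simp [hi]
  | succ k ih =>
    rw [Function.iterate_succ_apply', ih (by omega)]
    set w : ℕ → Fin m := fun i => if i = 0 then
      ⟨(u 0 : ℕ) + k, by have := (u 0).isLt; omega⟩ else u i with hw
    have hw0 : (w 0 : ℕ) = (u 0 : ℕ) + k := by simp [hw]
    rw [f1_eq w (by omega)]
    funext i
    by_cases hi : i = 0
    · subst hi
      simp only [if_pos rfl]
      apply Fin.ext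
      simp [hw0]
      omega
    · simp only [if_neg hi, hw, if_neg hi]

/-- The key relation: `f0 ∘ f1^k ∘ f0 = f0` for `k ≤ m - 2`. -/
lemma rel (hm : 2 ≤ m) (k : ℕ) (hk : k ≤ m - 2) (u : ℕ → Fin m) :
    f0 m ((f1 m)^[k] (f0 m u)) = f0 m u := by
  have h0 : ((f0 m u) 0 : ℕ) = 0 := f0_zero u
  rw [iter_f1 k (f0 m u) (by omega)]
  set w : ℕ → Fin m := fun i => if i = 0 then
    ⟨((f0 m u) 0 : ℕ) + k, by have := ((f0 m u) 0).isLt; omega⟩ else f0 m u i with hw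
  have hw0 : (w 0 : ℕ) = k := by simp [hw, h0]
  rw [f0_eq w (by omega)]
  funext i
  by_cases hi : i = 0
  · subst hi
    apply Fin.ext
    simp [h0]
  · simp only [if_neg hi, hw, if_neg hi]

/-- The normal forms: `f1^a` (when `c = 0`) or `f1^a ∘ f0 ∘ f1^(c-1)`. -/
noncomputable def CF (m : ℕ) : ℕ × ℕ → (ℕ → Fin m) → ℕ → Fin m
  | (a, 0) => (f1 m)^[a]
  | (a, e + 1) => (f1 m)^[a] ∘ f0 m ∘ (f1 m)^[e]

lemma foldr_eq_CF (hm : 2 ≤ m) : ∀ L : List ((ℕ → Fin m) → ℕ → Fin m),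
    (∀ g ∈ L, g = f0 m ∨ g = f1 m) → L.length ≤ m - 2 →
    ∃ a c, a + c ≤ L.length ∧ L.foldr (· ∘ ·) id = CF m (a, c) := by
  intro L
  induction L with
  | nil => exact fun _ _ => ⟨0, 0, by simp, by simp [CF]⟩
  | cons g L ih =>
    intro hall hlen
    obtain ⟨a, c, hac, hL⟩ := ih (fun g hg => hall g (List.mem_cons_of_mem _ hg))
      (by simp at hlen ⊢; omega)
    have hfold : (g :: L).foldr (· ∘ ·) id = g ∘ CF m (a, c) := by
      simp [List.foldr_cons, hL]
    rcases hall g List.mem_cons_self with hg | hg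
    · -- g = f0
      subst hg
      rcases c with _ | e
      · refine ⟨0, a + 1, by simpa using hac, ?_⟩
        rw [hfold]
        show f0 m ∘ (f1 m)^[a] = (f1 m)^[0] ∘ f0 m ∘ (f1 m)^[a]
        simp
      · refine ⟨0, e + 1, by simp at hlen ⊢; omega, ?_⟩
        rw [hfold]
        have ha2 : a ≤ m - 2 := by simp at hlen; omega
        show f0 m ∘ ((f1 m)^[a] ∘ f0 m ∘ (f1 m)^[e]) = (f1 m)^[0] ∘ f0 m ∘ (f1 m)^[e]
        funext u
        simp only [Function.comp_apply, Function.iterate_zero, id_eq]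
        exact rel hm a ha2 _
    · -- g = f1
      subst hg
      refine ⟨a + 1, c, by simp at hlen ⊢; omega, ?_⟩
      rw [hfold]
      rcases c with _ | e
      · show f1 m ∘ (f1 m)^[a] = (f1 m)^[a + 1]
        rw [Function.iterate_succ']
      · show f1 m ∘ ((f1 m)^[a] ∘ f0 m ∘ (f1 m)^[e]) = (f1 m)^[a+1] ∘ f0 m ∘ (f1 m)^[e]
        rw [Function.iterate_succ', Function.comp_assoc]
end Aux2
section Aux3

/-- Test sequence `(x, y, 0, 0, ...)`. -/
def pt (m x y : ℕ) (hm : 0 < m) : ℕ → Fin m := fun i =>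
  if i = 0 then ⟨x % m, Nat.mod_lt _ hm⟩
  else if i = 1 then ⟨y % m, Nat.mod_lt _ hm⟩ else ⟨0, hm⟩

variable {m : ℕ} (hm : 0 < m)

lemma pt_val0 {x : ℕ} (y : ℕ) (hx : x < m) : ((pt m x y hm) 0 : ℕ) = x := by
  simp [pt, Nat.mod_eq_of_lt hx]

lemma pt_val1 (x : ℕ) {y : ℕ} (hy : y < m) : ((pt m x y hm) 1 : ℕ) = y := by
  simp [pt, Nat.mod_eq_of_lt hy]

lemma f1_pt {x : ℕ} (y : ℕ) (hx : x + 1 ≤ m - 1) :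
    f1 m (pt m x y hm) = pt m (x + 1) y hm := by
  have hx' : x < m := by omega
  rw [f1_eq _ (by rw [pt_val0 hm y hx']; omega)]
  funext i
  by_cases hi : i = 0
  · subst hi
    rw [if_pos rfl]
    apply Fin.ext
    simp [pt_val0 hm y hx', pt_val0 hm y (show x + 1 < m by omega)]
  · rw [if_neg hi]
    simp [pt, hi]

lemma f1_pt_carry {y : ℕ} (hm2 : 2 ≤ m) (hy : y + 1 ≤ m - 1) :
    f1 m (pt m (m - 1) y hm) = pt m 0 (y + 1) hm := by
  have h0 : ((pt m (m-1) y hm) 0 : ℕ) = m - 1 := pt_val0 hm y (by omega)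
  have h1 : ((pt m (m-1) y hm) 1 : ℕ) = y := pt_val1 hm _ (by omega)
  rw [f1_eq2 _ h0 (by omega)]
  funext i
  by_cases hi : i = 0
  · subst hi
    rw [if_pos rfl]
    apply Fin.ext
    simp [pt]
  · by_cases hi1 : i = 1
    · subst hi1
      rw [if_neg hi, if_pos rfl]
      apply Fin.ext
      simp [h1, pt, Nat.mod_eq_of_lt (show y + 1 < m by omega), Nat.mod_eq_of_lt (show y < m by omega)]
    · rw [if_neg hi, if_neg hi1]
      simp [pt, hi, hi1]

lemma f0_pt {x : ℕ} (y : ℕ) (hm2 : 2 ≤ m) (hx : x ≤ m - 2) :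
    f0 m (pt m x y hm) = pt m 0 y hm := by
  rw [f0_eq _ (by rw [pt_val0 hm y (by omega)]; omega)]
  funext i
  by_cases hi : i = 0
  · subst hi
    rw [if_pos rfl]
    apply Fin.ext
    simp [pt]
  · rw [if_neg hi]
    simp [pt, hi]

lemma f0_pt_carry {y : ℕ} (hm2 : 2 ≤ m) (hy : y ≤ m - 2) :
    f0 m (pt m (m - 1) y hm) = pt m 0 0 hm := by
  have h0 : ((pt m (m-1) y hm) 0 : ℕ) = m - 1 := pt_val0 hm y (by omega)
  have h1 : ((pt m (m-1) y hm) 1 : ℕ) = y := pt_val1 hm _ (by omega)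
  rw [f0_eq2 _ h0 (by omega)]
  funext i
  by_cases hi : i ≤ 1
  · rw [if_pos hi]
    apply Fin.ext
    simp only [pt]
    split <;> simp
  · rw [if_neg hi]
    simp only [pt]
    rw [if_neg (by omega), if_neg (by omega), if_neg (by omega), if_neg (by omega)]

lemma iter_pt (k : ℕ) {x : ℕ} (y : ℕ) (h : x + k ≤ m - 1) :
    (f1 m)^[k] (pt m x y hm) = pt m (x + k) y hm := by
  induction k with
  | zero => rfl
  | succ k ih =>
    rw [Function.iterate_succ_apply', ih (by omega), f1_pt hm y (by omega), Nat.add_assoc]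

end Aux3
section Aux4
variable {m : ℕ}

lemma V1 (hm3 : 3 ≤ m) (hm0 : 0 < m) {b d : ℕ} (hb : b ≤ m - 2) (hd : d ≤ m - 2) :
    CF m (b, d) (pt m 0 0 hm0) = pt m b 0 hm0 := by
  rcases d with _ | e
  · show (f1 m)^[b] (pt m 0 0 hm0) = _
    rw [iter_pt hm0 b 0 (by omega), Nat.zero_add]
  · show (f1 m)^[b] (f0 m ((f1 m)^[e] (pt m 0 0 hm0))) = _
    rw [iter_pt hm0 e 0 (by omega), Nat.zero_add,
      f0_pt hm0 0 (by omega) (by omega), iter_pt hm0 b 0 (by omega), Nat.zero_add]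

lemma V2 (hm3 : 3 ≤ m) (hm0 : 0 < m) {b d : ℕ} (hb : b ≤ m - 3) (hd : d ≤ m - 3) :
    ((CF m (b, d) (pt m (m - 1) 0 hm0)) 0 : ℕ) =
      if d = 0 then (if b = 0 then m - 1 else b - 1) else b := by
  rcases d with _ | e
  · rw [if_pos rfl]
    rcases b with _ | b
    · show ((pt m (m - 1) 0 hm0 0 : Fin m) : ℕ) = _
      rw [if_pos rfl, pt_val0 hm0 0 (by omega)]
    · show (((f1 m)^[b+1] (pt m (m - 1) 0 hm0) 0 : Fin m) : ℕ) = _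
      rw [Function.iterate_succ_apply, f1_pt_carry hm0 (by omega) (by omega),
        iter_pt hm0 b 1 (by omega), Nat.zero_add, if_neg (by omega : ¬ b + 1 = 0),
        pt_val0 hm0 1 (by omega)]
      omega
  · rw [if_neg (by omega : ¬ e + 1 = 0)]
    show (((f1 m)^[b] (f0 m ((f1 m)^[e] (pt m (m - 1) 0 hm0))) 0 : Fin m) : ℕ) = b
    have hmid : f0 m ((f1 m)^[e] (pt m (m - 1) 0 hm0))
        = pt m 0 (if e = 0 then 0 else 1) hm0 := by
      rcases e with _ | e
      · rw [if_pos rfl]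
        show f0 m (pt m (m - 1) 0 hm0) = _
        exact f0_pt_carry hm0 (by omega) (by omega)
      · rw [Function.iterate_succ_apply, f1_pt_carry hm0 (by omega) (by omega),
          iter_pt hm0 e 1 (by omega), Nat.zero_add, if_neg (by omega : ¬ e + 1 = 0),
          f0_pt hm0 1 (by omega) (by omega)]
    rw [hmid, iter_pt hm0 b _ (by omega), Nat.zero_add, pt_val0 hm0 _ (by omega)]

lemma V3 (hm3 : 3 ≤ m) (hm0 : 0 < m) {a b b' : ℕ} (hb : b ≤ m - 3) (hb' : b' ≤ b)
    (ha : a ≤ m - 3) :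
    ((CF m (a, b' + 1) (pt m (m - 1 - b) 1 hm0)) 1 : ℕ) = if b' = b then 0 else 1 := by
  show (((f1 m)^[a] (f0 m ((f1 m)^[b'] (pt m (m - 1 - b) 1 hm0))) 1 : Fin m) : ℕ) = _
  rw [iter_pt hm0 b' 1 (by omega)]
  by_cases hbb : b' = b
  · subst hbb
    rw [show m - 1 - b' + b' = m - 1 by omega, f0_pt_carry hm0 (by omega) (by omega),
      iter_pt hm0 a 0 (by omega), Nat.zero_add, if_pos rfl, pt_val1 hm0 _ (by omega)]
  · rw [f0_pt hm0 1 (by omega) (by omega), iter_pt hm0 a 1 (by omega), Nat.zero_add,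
      if_neg hbb, pt_val1 hm0 _ (by omega)]

lemma CF_ne (hm3 : 3 ≤ m) {a a' b b' : ℕ} (ha : a ≤ m - 3) (ha' : a' ≤ m - 3)
    (hb : b ≤ m - 3) (hb' : b' < b) : CF m (a, b + 1) ≠ CF m (a', b' + 1) := by
  have hm0 : 0 < m := by omega
  intro h
  have e := congrArg (fun s => ((s (pt m (m - 1 - b) 1 hm0)) 1 : ℕ)) h
  rw [V3 hm3 hm0 hb le_rfl ha, V3 hm3 hm0 hb (le_of_lt hb') ha',
    if_pos rfl, if_neg (by omega)] at e
  omega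

lemma CF_inj (hm3 : 3 ≤ m) {a c a' c' : ℕ} (ha : a ≤ m - 3) (hc : c ≤ m - 3)
    (ha' : a' ≤ m - 3) (hc' : c' ≤ m - 3) (h : CF m (a, c) = CF m (a', c')) :
    a = a' ∧ c = c' := by
  have hm0 : 0 < m := by omega
  have e1 := congrArg (fun s => ((s (pt m 0 0 hm0)) 0 : ℕ)) h
  rw [V1 hm3 hm0 (by omega) (by omega), V1 hm3 hm0 (by omega) (by omega),
    pt_val0 hm0 0 (by omega), pt_val0 hm0 0 (by omega)] at e1
  have e2 := congrArg (fun s => ((s (pt m (m - 1) 0 hm0)) 0 : ℕ)) h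
  rw [V2 hm3 hm0 ha hc, V2 hm3 hm0 ha' hc'] at e2
  refine ⟨e1, ?_⟩
  rcases Nat.eq_zero_or_pos c with hc0 | hc0 <;> rcases Nat.eq_zero_or_pos c' with hc0' | hc0'
  · omega
  · exfalso
    rw [if_pos hc0, if_neg (show ¬ c' = 0 by omega)] at e2
    by_cases haz : a = 0
    · rw [if_pos haz] at e2; omega
    · rw [if_neg haz] at e2; omega
  · exfalso
    rw [if_neg (show ¬ c = 0 by omega), if_pos hc0'] at e2
    by_cases haz : a' = 0
    · rw [if_pos haz] at e2; omega
    · rw [if_neg haz] at e2; omega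
  · obtain ⟨b, rfl⟩ : ∃ b, c = b + 1 := ⟨c - 1, by omega⟩
    obtain ⟨b', rfl⟩ : ∃ b', c' = b' + 1 := ⟨c' - 1, by omega⟩
    rcases lt_trichotomy b b' with hlt | heq | hgt
    · exact absurd h.symm (CF_ne hm3 ha' ha (by omega) hlt)
    · omega
    · exact absurd h (CF_ne hm3 ha ha' (by omega) hgt)

end Aux4
section Aux5
variable {m : ℕ}

lemma foldr_replicate {α : Type*} (k : ℕ) (f x : (α → α)) :
    (List.replicate k f).foldr (· ∘ ·) x = f^[k] ∘ x := by
  induction k with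
  | zero => simp
  | succ k ih =>
    simp only [List.replicate_succ, List.foldr_cons, ih, Function.iterate_succ',
      Function.comp_assoc]

/-- A word representing the normal form `CF m (a, c)`. -/
noncomputable def word (m a c : ℕ) : List ((ℕ → Fin m) → ℕ → Fin m) :=
  List.replicate a (f1 m) ++
    (if c = 0 then [] else f0 m :: List.replicate (c - 1) (f1 m))

lemma word_length (a c : ℕ) : (word m a c).length = a + c := by
  rcases c with _ | e
  · simp [word]
  · simp only [word, if_neg (by omega : ¬ e + 1 = 0), List.length_append,
      List.length_replicate, List.length_cons]
    omega

lemma word_mem (a c : ℕ) : ∀ g ∈ word m a c, g = f0 m ∨ g = f1 m := by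
  intro g hg
  simp only [word, List.mem_append] at hg
  rcases hg with hg | hg
  · exact Or.inr (List.eq_of_mem_replicate hg)
  · rcases c with _ | e
    · simp at hg
    · simp only [if_neg (by omega : ¬ e + 1 = 0), List.mem_cons] at hg
      rcases hg with rfl | hg
      · exact Or.inl rfl
      · exact Or.inr (List.eq_of_mem_replicate hg)

lemma word_foldr (a c : ℕ) : (word m a c).foldr (· ∘ ·) id = CF m (a, c) := by
  rcases c with _ | e
  · show (List.replicate a (f1 m) ++ []).foldr (· ∘ ·) id = (f1 m)^[a]
    rw [List.append_nil, foldr_replicate, Function.comp_id]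
  · show (List.replicate a (f1 m) ++ (f0 m :: List.replicate e (f1 m))).foldr (· ∘ ·) id
        = (f1 m)^[a] ∘ f0 m ∘ (f1 m)^[e]
    rw [List.foldr_append, List.foldr_cons, foldr_replicate, foldr_replicate,
      Function.comp_id]

lemma card_K (n : ℕ) :
    (((Finset.range (n+1)) ×ˢ (Finset.range (n+1))).filter
      (fun p => p.1 + p.2 ≤ n)).card = (n + 1) * (n + 2) / 2 := by
  have hset : ((Finset.range (n+1)) ×ˢ (Finset.range (n+1))).filter
      (fun p => p.1 + p.2 ≤ n)
      = (Finset.range (n+1)).biUnion (fun k => Finset.HasAntidiagonal.antidiagonal k) := by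
    ext p
    simp only [Finset.mem_filter, Finset.mem_product, Finset.mem_range,
      Finset.mem_biUnion, Finset.HasAntidiagonal.mem_antidiagonal]
    constructor
    · rintro ⟨⟨h1, h2⟩, h3⟩
      exact ⟨p.1 + p.2, by omega, rfl⟩
    · rintro ⟨k, hk, rfl⟩
      omega
  rw [hset, Finset.card_biUnion]
  · have h1 : ∀ k ∈ Finset.range (n+1), (Finset.HasAntidiagonal.antidiagonal k).card = k + 1 :=
      fun k _ => Finset.Nat.card_antidiagonal k
    rw [Finset.sum_congr rfl h1]
    have h2 := Finset.sum_range_id_mul_two (n + 2)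
    have h3 : ∑ i ∈ Finset.range (n + 2), i
        = (∑ k ∈ Finset.range (n + 1), (k + 1)) + 0 := Finset.sum_range_succ' _ _
    have h4 : (n + 2) * (n + 2 - 1) = (n + 1) * (n + 2) := by rw [show n + 2 - 1 = n + 1 from rfl]; ring
    omega
  · intro x _ y _ hxy
    rw [Function.onFun, Finset.disjoint_left]
    intro p hp hp'
    simp only [Finset.HasAntidiagonal.mem_antidiagonal] at hp hp'
    exact hxy (by omega)

end Aux5

/-- The sequence of growth functions `(Γ_m)` tends pointwise to
`n ↦ (n+1)(n+2)/2` as `m → ∞`. -/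
theorem Gamma_pointwise_limit (n : ℕ) :
    ∃ M : ℕ, ∀ m : ℕ, M ≤ m → GammaG m n = (n + 1) * (n + 2) / 2 := by
  refine ⟨n + 3, fun m hm => ?_⟩
  have hm3 : 3 ≤ m := by omega
  have hm0 : 0 < m := by omega
  set K : Finset (ℕ × ℕ) := ((Finset.range (n+1)) ×ˢ (Finset.range (n+1))).filter
    (fun p => p.1 + p.2 ≤ n) with hK
  have hmemK : ∀ p : ℕ × ℕ, p ∈ K ↔ p.1 + p.2 ≤ n := by
    intro p
    simp only [hK, Finset.mem_filter, Finset.mem_product, Finset.mem_range]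
    omega
  have hset : {s | s ∈ SM m ∧ wordLength m s ≤ n} = CF m '' ↑K := by
    ext s
    constructor
    · rintro ⟨hs, hlen⟩
      obtain ⟨L0, hL0mem, hL0fold⟩ := hs
      have hne : {k | ∃ L : List ((ℕ → Fin m) → ℕ → Fin m),
          L.length = k ∧ (∀ g ∈ L, g = f0 m ∨ g = f1 m) ∧
          L.foldr (· ∘ ·) id = s}.Nonempty := ⟨L0.length, L0, rfl, hL0mem, hL0fold⟩
      obtain ⟨L, hLlen, hLmem, hLfold⟩ := Nat.sInf_mem hne
      have hLn : L.length ≤ n := by rw [hLlen]; exact hlen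
      obtain ⟨a, c, hac, heq⟩ := foldr_eq_CF (by omega) L hLmem (by omega)
      refine ⟨(a, c), ?_, by rw [← hLfold, heq]⟩
      rw [Finset.mem_coe, hmemK]
      simpa using le_trans hac hLn
    · rintro ⟨⟨a, c⟩, hp, rfl⟩
      rw [Finset.mem_coe, hmemK] at hp
      simp only at hp
      constructor
      · exact ⟨word m a c, word_mem a c, word_foldr a c⟩
      · calc wordLength m (CF m (a, c)) ≤ a + c :=
              Nat.sInf_le ⟨word m a c, word_length a c, word_mem a c, word_foldr a c⟩
          _ ≤ n := hp
  have hinj : Set.InjOn (CF m) ↑K := by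
    rintro ⟨a, c⟩ hp ⟨a', c'⟩ hq h
    rw [Finset.mem_coe, hmemK] at hp hq
    simp only at hp hq
    obtain ⟨h1, h2⟩ := CF_inj hm3 (a := a) (c := c) (a' := a') (c' := c')
      (by omega) (by omega) (by omega) (by omega) h
    simp [h1, h2]
  rw [GammaG, hset, Set.ncard_image_of_injOn hinj, Set.ncard_coe_finset, hK, card_K]
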